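/- Let S_r and S_s be the sets of weight vectors θ = (W_L, ..., W_1) in the fiber μ^{-1}(W) whose rank lists are r and s respectively (both assumed nonempty). If S_r intersects the closure of S_s (in the Euclidean topology on the weight space), then r_{k∼i} ≤ s_{k∼i} for all L ≥ k ≥ i ≥ 0. -/

import Mathlib

open Matrix

/-- The subsequence matrix `W_{k∼i} = W_k W_{k−1} ⋯ W_{i+1}` of a linear neural network.
Here `W j` is the matrix of edge layer `j+1` (mapping unit layer `j` to unit layer `j+1`),
so `subseq d W i k` is the product of the edge-layer matrices carrying unit layer `i`
to unit layer `k`.  By convention `subseq d W k k` is the identity, and values with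
`k < i` are junk. -/
noncomputable def subseq (d : ℕ → ℕ)
    (W : ∀ j : ℕ, Matrix (Fin (d (j + 1))) (Fin (d j)) ℝ) (i : ℕ) :
    (k : ℕ) → Matrix (Fin (d k)) (Fin (d i)) ℝ
  | 0 =>
    if h : i = 0 then
      (1 : Matrix (Fin (d 0)) (Fin (d 0)) ℝ).submatrix id (Fin.cast (congrArg d h))
    else 0
  | k + 1 =>
    if h : i = k + 1 then
      (1 : Matrix (Fin (d (k + 1))) (Fin (d (k + 1))) ℝ).submatrix id (Fin.cast (congrArg d h))
    else W k * subseq d W i k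


lemma submatrix_id_eq_mul {a b t : ℕ} (A : Matrix (Fin a) (Fin b) ℝ) (c : Fin t → Fin b) :
    A.submatrix id c = A * (1 : Matrix (Fin b) (Fin b) ℝ).submatrix id c := by
  ext i j
  simp [Matrix.mul_apply, Matrix.one_apply, mul_ite]

lemma rank_submatrix_id_le {a b t : ℕ} (A : Matrix (Fin a) (Fin b) ℝ) (c : Fin t → Fin b) :
    (A.submatrix id c).rank ≤ A.rank := by
  rw [submatrix_id_eq_mul]
  exact Matrix.rank_mul_le_left _ _

lemma le_rank_of_gram {a b t : ℕ} (A : Matrix (Fin a) (Fin b) ℝ) (c : Fin t → Fin b)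
    (h : ((A.submatrix id c)ᵀ * (A.submatrix id c)).det ≠ 0) : t ≤ A.rank := by
  have h1 : ((A.submatrix id c)ᵀ * (A.submatrix id c)).rank = t :=
    (Matrix.rank_of_isUnit _ ((Matrix.isUnit_iff_isUnit_det _).2 (isUnit_iff_ne_zero.2 h))).trans
      (Fintype.card_fin t)
  calc t = _ := h1.symm
    _ ≤ (A.submatrix id c).rank := Matrix.rank_mul_le_right _ _
    _ ≤ A.rank := rank_submatrix_id_le A c

lemma det_ne_zero_of_rank_eq {t : ℕ} (M : Matrix (Fin t) (Fin t) ℝ) (h : M.rank = t) :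
    M.det ≠ 0 := by
  intro hdet
  obtain ⟨v, hv, hMv⟩ := (Matrix.exists_mulVec_eq_zero_iff).2 hdet
  have hrn := LinearMap.finrank_range_add_finrank_ker M.mulVecLin
  rw [show Module.finrank ℝ (Fin t → ℝ) = t by simp, ← Matrix.rank, h] at hrn
  have hker : LinearMap.ker M.mulVecLin = ⊥ := Submodule.finrank_eq_zero.1 (by omega)
  have : v ∈ LinearMap.ker M.mulVecLin := by 
    rw [LinearMap.mem_ker, Matrix.mulVecLin_apply, hMv]
  rw [hker, Submodule.mem_bot] at this
  exact hv this

lemma exists_gram {a b : ℕ} (A : Matrix (Fin a) (Fin b) ℝ) :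
    ∃ c : Fin A.rank → Fin b, ((A.submatrix id c)ᵀ * (A.submatrix id c)).det ≠ 0 := by
  obtain ⟨bs, hsub, hspan, hind⟩ := exists_linearIndependent ℝ (Set.range Aᵀ)
  have hfin : bs.Finite := hind.setFinite
  haveI := hfin.fintype
  have hcard : bs.toFinset.card = A.rank := by
    rw [← finrank_span_set_eq_card hind, hspan, Matrix.rank_eq_finrank_span_cols]; rfl
  have e : Fin A.rank ≃ bs := (Fintype.equivFinOfCardEq (by rw [← hcard]; exact (Set.toFinset_card bs).symm)).symm
  have hc : ∀ i : Fin A.rank, ∃ j : Fin b, Aᵀ j = (e i : Fin a → ℝ) := fun i => hsub (e i).2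
  choose c hcspec using hc
  refine ⟨c, ?_⟩
  have hBT : (A.submatrix id c)ᵀ = fun i => (e i : Fin a → ℝ) := by
    ext i j
    rw [← hcspec i]
    rfl
  have hBind : LinearIndependent ℝ (A.submatrix id c)ᵀ := by
    rw [hBT]
    exact hind.comp _ e.injective
  have hBrank : (A.submatrix id c).rank = A.rank := by
    rw [← Matrix.rank_transpose, LinearIndependent.rank_matrix (M := (A.submatrix id c)ᵀ) hBind, Fintype.card_fin]
  apply det_ne_zero_of_rank_eq
  rw [Matrix.rank_transpose_mul_self, hBrank]

lemma rank_nhds {a b : ℕ} (A : Matrix (Fin a) (Fin b) ℝ) :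
    ∃ U : Set (Matrix (Fin a) (Fin b) ℝ), IsOpen U ∧ A ∈ U ∧ ∀ B ∈ U, A.rank ≤ B.rank := by
  obtain ⟨c, hc⟩ := exists_gram A
  refine ⟨{B | ((B.submatrix id c)ᵀ * (B.submatrix id c)).det ≠ 0}, ?_, hc,
    fun B hB => le_rank_of_gram B c hB⟩
  have hcont : Continuous fun B : Matrix (Fin a) (Fin b) ℝ =>
      ((B.submatrix id c)ᵀ * (B.submatrix id c)).det :=
    (((continuous_id.matrix_submatrix id c).matrix_transpose).matrix_mul
      (continuous_id.matrix_submatrix id c)).matrix_det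
  exact isOpen_ne.preimage hcont

lemma continuous_subseq (d : ℕ → ℕ) (i k : ℕ) :
    Continuous fun φ : ∀ j : ℕ, Matrix (Fin (d (j + 1))) (Fin (d j)) ℝ => subseq d φ i k := by
  induction k with
  | zero =>
    by_cases h : i = 0
    · simp only [subseq, dif_pos h]; exact continuous_const
    · simp only [subseq, dif_neg h]; exact continuous_const
  | succ k ih =>
    by_cases h : i = k + 1
    · simp only [subseq, dif_pos h]; exact continuous_const
    · simp only [subseq, dif_neg h]
      exact (continuous_apply k).matrix_mul ih

/-- Lemma `stratatouch`.
If a point `θ` of the fiber `μ⁻¹(W)` has rank list `r` and lies in the closure of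
the set of points of the fiber with rank list `s`, then `r_{k∼i} ≤ s_{k∼i}` for all
`L ≥ k ≥ i ≥ 0`. -/
theorem rank_list_le_of_mem_closure (L : ℕ) (d : ℕ → ℕ)
    (Wmat : Matrix (Fin (d L)) (Fin (d 0)) ℝ)
    (r s : ℕ → ℕ → ℕ)
    (θ : ∀ j : ℕ, Matrix (Fin (d (j + 1))) (Fin (d j)) ℝ)
    (hθfib : subseq d θ 0 L = Wmat)
    (hθrank : ∀ k i, i ≤ k → k ≤ L → (subseq d θ i k).rank = r k i)
    (hclos : θ ∈ closure {φ : ∀ j : ℕ, Matrix (Fin (d (j + 1))) (Fin (d j)) ℝ |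
        subseq d φ 0 L = Wmat ∧ ∀ k i, i ≤ k → k ≤ L → (subseq d φ i k).rank = s k i}) :
    ∀ k i, i ≤ k → k ≤ L → r k i ≤ s k i := by
  intro k i hik hkL
  obtain ⟨U, hUo, hAU, hU⟩ := rank_nhds (subseq d θ i k)
  have hUn : (fun φ => subseq d φ i k) ⁻¹' U ∈ nhds θ :=
    (hUo.preimage (continuous_subseq d i k)).mem_nhds hAU
  obtain ⟨φ, hφU, hφS⟩ := (mem_closure_iff_nhds.mp hclos _ hUn)
  rw [← hθrank k i hik hkL, ← hφS.2 k i hik hkL]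
  exact hU _ hφU
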